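/- Let α ∈ ℝ, σ² > 0 and η, κ ≥ 0 with η + κ < 1. Then there exist ψ ∈ (0,1), L > 0 and G > 0 such that for every λ ≥ 0, with P the product of the Gaussian measure on ℝ with mean α and variance σ² and the Poisson distribution on ℕ with rate λ, ∫ (1 + (exp(y) + η·n + κ·λ)²) dP(y, n) ≤ ψ·(1 + λ²) + L·𝟙{λ ≤ G}. -/

import Mathlib

open MeasureTheory ProbabilityTheory Real
open scoped Nat NNReal ENNReal

section Helpers

lemma hasSum_exp_div' (x : ℝ) : HasSum (fun n : ℕ => x ^ n / n !) (rexp x) := by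
  rw [Real.exp_eq_exp_ℝ]
  exact NormedSpace.expSeries_div_hasSum_exp x

lemma fact_succ_term' (x : ℝ) (n : ℕ) :
    ((n + 1 : ℕ) : ℝ) * (x ^ (n + 1) / (n + 1)!) = x * (x ^ n / n !) := by
  rw [Nat.factorial_succ, pow_succ]
  have h1 : ((n ! : ℕ) : ℝ) ≠ 0 := by positivity
  have h2 : ((n : ℝ) + 1) ≠ 0 := by positivity
  push_cast
  field_simp

lemma hasSum_mul_exp_div' (x : ℝ) :
    HasSum (fun n : ℕ => (n : ℝ) * (x ^ n / n !)) (x * rexp x) := by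
  have key : (fun n : ℕ => ((n + 1 : ℕ) : ℝ) * (x ^ (n + 1) / (n + 1)!))
      = fun n : ℕ => x * (x ^ n / n !) := funext fun n => fact_succ_term' x n
  have h2 := key ▸ ((hasSum_exp_div' x).mul_left x)
  have := (hasSum_nat_add_iff (f := fun n : ℕ => (n : ℝ) * (x ^ n / n !)) 1).mp h2
  simpa using this

lemma hasSum_sq_mul_exp_div' (x : ℝ) :
    HasSum (fun n : ℕ => ((n : ℝ))^2 * (x ^ n / n !)) ((x^2 + x) * rexp x) := by
  have key : (fun n : ℕ => (((n + 1 : ℕ) : ℝ))^2 * (x ^ (n + 1) / (n + 1)!))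
      = fun n : ℕ => x * ((n : ℝ) * (x ^ n / n !)) + x * (x ^ n / n !) := by
    funext n
    have h := fact_succ_term' x n
    have hsq : (((n + 1 : ℕ) : ℝ))^2 * (x ^ (n + 1) / (n + 1)!)
        = ((n + 1 : ℕ) : ℝ) * (((n + 1 : ℕ) : ℝ) * (x ^ (n + 1) / (n + 1)!)) := by ring
    rw [hsq, h]
    push_cast
    ring
  have hs := ((hasSum_mul_exp_div' x).mul_left x).add ((hasSum_exp_div' x).mul_left x)
  have h2 := key ▸ hs
  have := (hasSum_nat_add_iff (f := fun n : ℕ => ((n : ℝ))^2 * (x ^ n / n !)) 1).mp h2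
  have heq : x * (x * rexp x) + x * rexp x = (x^2 + x) * rexp x := by ring
  simpa [heq] using this

lemma poissonPMF_toReal' (r : ℝ≥0) (n : ℕ) :
    ((poissonPMF r) n).toReal = rexp (-(r:ℝ)) * (r:ℝ) ^ n / n ! := by
  show (ENNReal.ofReal (poissonPMFReal r n)).toReal = _
  rw [ENNReal.toReal_ofReal poissonPMFReal_nonneg, poissonPMFReal]

lemma poissonMeasure_eq_toMeasure' (r : ℝ≥0) : poissonMeasure r = (poissonPMF r).toMeasure :=
  Measure.ext_iff_singleton.mpr fun n => by
    rw [poissonMeasure_singleton, PMF.toMeasure_apply_singleton _ _ (measurableSet_singleton n)]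
    show _ = ENNReal.ofReal (poissonPMFReal r n)
    rw [poissonPMFReal]

lemma pmf_nat_integrable' (p : PMF ℕ) (f : ℕ → ℝ) (hf : ∀ n, 0 ≤ f n)
    (h : Summable fun n => (p n).toReal * f n) : Integrable f p.toMeasure := by
  refine ⟨(measurable_of_countable f).aestronglyMeasurable, ?_⟩
  rw [HasFiniteIntegral, lintegral_countable']
  have h1 : ∀ n : ℕ, ‖f n‖ₑ * p.toMeasure {n}
      = ENNReal.ofReal ((p n).toReal * f n) := by
    intro n
    rw [p.toMeasure_apply_singleton n (measurableSet_singleton n),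
      ENNReal.ofReal_mul ENNReal.toReal_nonneg, ENNReal.ofReal_toReal (p.apply_ne_top n),
      ← ofReal_norm, Real.norm_eq_abs, abs_of_nonneg (hf n), mul_comm]
  rw [tsum_congr h1,
    ← ENNReal.ofReal_tsum_of_nonneg (fun n => mul_nonneg ENNReal.toReal_nonneg (hf n)) h]
  exact ENNReal.ofReal_lt_top

lemma pmf_nat_integral' (p : PMF ℕ) (f : ℕ → ℝ) (hf : Integrable f p.toMeasure) :
    ∫ n, f n ∂p.toMeasure = ∑' n, (p n).toReal * f n := by
  rw [PMF.integral_eq_tsum p f hf]; simp [smul_eq_mul]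

lemma poisson_summand_id' (r : ℝ≥0) (n : ℕ) :
    ((poissonPMF r) n).toReal * (n : ℝ) = rexp (-(r:ℝ)) * ((n : ℝ) * ((r:ℝ) ^ n / n !)) := by
  rw [poissonPMF_toReal']; ring

lemma poisson_summand_sq' (r : ℝ≥0) (n : ℕ) :
    ((poissonPMF r) n).toReal * ((n : ℝ))^2
      = rexp (-(r:ℝ)) * (((n : ℝ))^2 * ((r:ℝ) ^ n / n !)) := by
  rw [poissonPMF_toReal']; ring

lemma poisson_hasSum_id' (r : ℝ≥0) :
    HasSum (fun n : ℕ => ((poissonPMF r) n).toReal * (n : ℝ)) (r : ℝ) := by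
  have h := (hasSum_mul_exp_div' (r:ℝ)).mul_left (rexp (-(r:ℝ)))
  have heq : rexp (-(r:ℝ)) * ((r:ℝ) * rexp (r:ℝ)) = (r:ℝ) := by
    rw [Real.exp_neg]; field_simp
  rw [heq] at h
  exact h.congr_fun fun n => poisson_summand_id' r n

lemma poisson_hasSum_sq' (r : ℝ≥0) :
    HasSum (fun n : ℕ => ((poissonPMF r) n).toReal * ((n : ℝ))^2) ((r:ℝ)^2 + (r:ℝ)) := by
  have h := (hasSum_sq_mul_exp_div' (r:ℝ)).mul_left (rexp (-(r:ℝ)))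
  have heq : rexp (-(r:ℝ)) * (((r:ℝ)^2 + (r:ℝ)) * rexp (r:ℝ)) = (r:ℝ)^2 + (r:ℝ) := by
    rw [Real.exp_neg]; field_simp
  rw [heq] at h
  exact h.congr_fun fun n => poisson_summand_sq' r n

lemma integrable_poisson_id' (r : ℝ≥0) :
    Integrable (fun n : ℕ => (n : ℝ)) (poissonMeasure r) := by
  rw [poissonMeasure_eq_toMeasure' r]; exact pmf_nat_integrable' _ _ (fun n => Nat.cast_nonneg n) (poisson_hasSum_id' r).summable

lemma integrable_poisson_sq' (r : ℝ≥0) :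
    Integrable (fun n : ℕ => ((n : ℝ))^2) (poissonMeasure r) := by
  rw [poissonMeasure_eq_toMeasure' r]; exact pmf_nat_integrable' _ _ (fun _ => sq_nonneg _) (poisson_hasSum_sq' r).summable

lemma integral_poisson_id' (r : ℝ≥0) :
    ∫ n : ℕ, (n : ℝ) ∂(poissonMeasure r) = (r : ℝ) := by
  rw [show poissonMeasure r = (poissonPMF r).toMeasure from poissonMeasure_eq_toMeasure' r,
    pmf_nat_integral' _ _ (by rw [← poissonMeasure_eq_toMeasure']; exact integrable_poisson_id' r)]
  exact (poisson_hasSum_id' r).tsum_eq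

lemma integral_poisson_sq' (r : ℝ≥0) :
    ∫ n : ℕ, ((n : ℝ))^2 ∂(poissonMeasure r) = (r : ℝ)^2 + (r : ℝ) := by
  rw [show poissonMeasure r = (poissonPMF r).toMeasure from poissonMeasure_eq_toMeasure' r,
    pmf_nat_integral' _ _ (by rw [← poissonMeasure_eq_toMeasure']; exact integrable_poisson_sq' r)]
  exact (poisson_hasSum_sq' r).tsum_eq

lemma integrable_exp_mul_gaussian' (μ : ℝ) (v : ℝ≥0) (hv : v ≠ 0) (c : ℝ) :
    Integrable (fun x => rexp (c * x)) (gaussianReal μ v) := by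
  have hvpos : (0:ℝ) < (v:ℝ) := by
    have := pos_iff_ne_zero.mpr hv
    exact_mod_cast this
  rw [gaussianReal_of_var_ne_zero _ hv,
    integrable_withDensity_iff (measurable_gaussianPDF μ v)
      (ae_of_all _ fun x => ENNReal.ofReal_lt_top)]
  have hb : (0:ℝ) < (2 * (v:ℝ))⁻¹ := by positivity
  have base : Integrable (fun x : ℝ => rexp (-(2 * (v:ℝ))⁻¹ * x ^ 2)) :=
    integrable_exp_neg_mul_sq hb
  have shifted := base.comp_sub_right (μ + c * v)
  have final := shifted.const_mul ((Real.sqrt (2 * π * v))⁻¹ * rexp (c * μ + c ^ 2 * v / 2))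
  refine final.congr (ae_of_all _ fun x => ?_)
  show (Real.sqrt (2 * π * v))⁻¹ * rexp (c * μ + c ^ 2 * v / 2)
      * rexp (-(2 * (v:ℝ))⁻¹ * (x - (μ + c * v)) ^ 2)
      = rexp (c * x) * (gaussianPDF μ v x).toReal
  rw [show gaussianPDF μ v x = ENNReal.ofReal (gaussianPDFReal μ v x) from rfl,
    ENNReal.toReal_ofReal (gaussianPDFReal_nonneg μ v x), gaussianPDFReal]
  have hgoal : c * μ + c ^ 2 * v / 2 + (-(2 * (v:ℝ))⁻¹ * (x - (μ + c * v)) ^ 2)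
      = c * x + (-(x - μ) ^ 2 / (2 * (v:ℝ))) := by field_simp; ring
  have key : rexp (c * μ + c ^ 2 * v / 2) * rexp (-(2 * (v:ℝ))⁻¹ * (x - (μ + c * v)) ^ 2)
      = rexp (c * x) * rexp (-(x - μ) ^ 2 / (2 * (v:ℝ))) := by
    rw [← Real.exp_add, ← Real.exp_add, hgoal]
  linear_combination (√(2 * π * (v:ℝ)))⁻¹ * key

lemma integrable_expsq_gaussian' (μ : ℝ) (v : ℝ≥0) (hv : v ≠ 0) :
    Integrable (fun x => rexp x ^ 2) (gaussianReal μ v) := by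
  refine (integrable_exp_mul_gaussian' μ v hv 2).congr (ae_of_all _ fun x => ?_)
  dsimp only
  rw [sq, ← Real.exp_add]
  ring_nf

lemma integrable_exp_gaussian' (μ : ℝ) (v : ℝ≥0) (hv : v ≠ 0) :
    Integrable (fun x => rexp x) (gaussianReal μ v) := by
  refine (integrable_exp_mul_gaussian' μ v hv 1).congr (ae_of_all _ fun x => ?_)
  dsimp only
  rw [one_mul]

end Helpers

/-- Geometric drift condition for the SPINGARCH(1,1) chain with test function
`V(λ) = 1 + λ²`: under `η, κ ≥ 0` and `η + κ < 1` there exist `ψ ∈ (0,1)`, `L > 0` and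
`G > 0` such that for all `λ ≥ 0`,
`E[1 + (exp(Y) + η·Z + κ·λ)²] ≤ ψ·(1 + λ²) + L·𝟙{λ ≤ G}`. -/
theorem spingarch_drift_condition (α σ2 : ℝ) (hσ2 : 0 < σ2)
    (η κ : ℝ) (hη : 0 ≤ η) (hκ : 0 ≤ κ) (hηκ : η + κ < 1) :
    ∃ ψ ∈ Set.Ioo (0 : ℝ) 1, ∃ L > (0 : ℝ), ∃ G > (0 : ℝ), ∀ lam : ℝ, 0 ≤ lam →
      (∫ p : ℝ × ℕ, (1 + (Real.exp p.1 + η * (p.2 : ℝ) + κ * lam) ^ 2)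
          ∂((gaussianReal α σ2.toNNReal).prod (poissonMeasure lam.toNNReal)))
        ≤ ψ * (1 + lam ^ 2) + (if lam ≤ G then L else 0) := by
  set v : ℝ≥0 := σ2.toNNReal with hv_def
  have hv : v ≠ 0 := by
    simp only [hv_def, ne_eq, Real.toNNReal_eq_zero, not_le]
    exact hσ2
  set γ := gaussianReal α v with hγ_def
  set m1 : ℝ := ∫ y, rexp y ∂γ with hm1_def
  set m2 : ℝ := ∫ y, rexp y ^ 2 ∂γ with hm2_def
  have hm1 : 0 ≤ m1 := integral_nonneg fun y => (Real.exp_pos y).le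
  have hm2 : 0 ≤ m2 := integral_nonneg fun y => sq_nonneg _
  set a : ℝ := (η + κ) ^ 2 with ha_def
  set b : ℝ := η ^ 2 + 2 * (η + κ) * m1 with hb_def
  have ha0 : 0 ≤ a := sq_nonneg _
  have ha1 : a < 1 := by nlinarith
  have hb0 : 0 ≤ b := by nlinarith
  set ψ : ℝ := (a + 1) / 2 with hψ_def
  set δ : ℝ := (1 - a) / 2 with hδ_def
  have hδ : 0 < δ := by simp only [hδ_def]; linarith
  set G : ℝ := max 1 ((b + 1 + m2) / δ) with hG_def
  have hG1 : (1:ℝ) ≤ G := le_max_left _ _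
  have hGδ : b + 1 + m2 ≤ δ * G := by
    have h1 : (b + 1 + m2) / δ ≤ G := le_max_right _ _
    calc b + 1 + m2 = δ * ((b + 1 + m2) / δ) := by field_simp
    _ ≤ δ * G := by exact mul_le_mul_of_nonneg_left h1 hδ.le
  set L : ℝ := 1 + m2 + a * G ^ 2 + b * G with hL_def
  have hL : 0 < L := by nlinarith
  refine ⟨ψ, ⟨by simp only [hψ_def]; linarith, by simp only [hψ_def]; linarith⟩,
    L, hL, G, by linarith, fun lam hlam => ?_⟩
  set r : ℝ≥0 := lam.toNNReal with hr_def
  have hr : (r : ℝ) = lam := Real.coe_toNNReal lam hlam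
  set P := γ.prod (poissonMeasure r) with hP_def
  -- component integrabilities
  have hf1 : Integrable (fun y : ℝ => 1 + rexp y ^ 2) γ :=
    (integrable_const 1).add (integrable_expsq_gaussian' α v hv)
  have hf2 : Integrable (fun y : ℝ => 2 * rexp y) γ :=
    (integrable_exp_gaussian' α v hv).const_mul 2
  have hg2 : Integrable (fun n : ℕ => η * (n : ℝ) + κ * lam) (poissonMeasure r) :=
    ((integrable_poisson_id' r).const_mul η).add (integrable_const (κ * lam))
  have hg3 : Integrable
      (fun n : ℕ => η ^ 2 * ((n : ℝ))^2 + (2 * η * (κ * lam) * (n : ℝ) + (κ * lam) ^ 2))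
      (poissonMeasure r) :=
    ((integrable_poisson_sq' r).const_mul (η ^ 2)).add
      (((integrable_poisson_id' r).const_mul (2 * η * (κ * lam))).add
        (integrable_const ((κ * lam) ^ 2)))
  have hF1 : Integrable
      (fun p : ℝ × ℕ => (1 + rexp p.1 ^ 2) * (fun _ : ℕ => (1:ℝ)) p.2) P :=
    hf1.mul_prod (integrable_const 1)
  have hF2 : Integrable
      (fun p : ℝ × ℕ => (2 * rexp p.1) * (η * (p.2 : ℝ) + κ * lam)) P :=
    hf2.mul_prod hg2
  have hF3 : Integrable
      (fun p : ℝ × ℕ => (fun _ : ℝ => (1:ℝ)) p.1 *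
        (η ^ 2 * ((p.2 : ℝ))^2 + (2 * η * (κ * lam) * (p.2 : ℝ) + (κ * lam) ^ 2))) P :=
    (integrable_const 1).mul_prod hg3
  -- split the integral
  have e1 : ∫ p : ℝ × ℕ, ((1 + rexp p.1 ^ 2) * (fun _ : ℕ => (1:ℝ)) p.2
        + (2 * rexp p.1) * (η * (p.2 : ℝ) + κ * lam)
        + (fun _ : ℝ => (1:ℝ)) p.1 *
            (η ^ 2 * ((p.2 : ℝ))^2 + (2 * η * (κ * lam) * (p.2 : ℝ) + (κ * lam) ^ 2))) ∂P
      = (∫ p : ℝ × ℕ, ((1 + rexp p.1 ^ 2) * (fun _ : ℕ => (1:ℝ)) p.2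
          + (2 * rexp p.1) * (η * (p.2 : ℝ) + κ * lam)) ∂P)
        + ∫ p : ℝ × ℕ, ((fun _ : ℝ => (1:ℝ)) p.1 *
            (η ^ 2 * ((p.2 : ℝ))^2 + (2 * η * (κ * lam) * (p.2 : ℝ) + (κ * lam) ^ 2))) ∂P :=
    integral_add (hF1.add hF2) hF3
  have e2 : ∫ p : ℝ × ℕ, ((1 + rexp p.1 ^ 2) * (fun _ : ℕ => (1:ℝ)) p.2
        + (2 * rexp p.1) * (η * (p.2 : ℝ) + κ * lam)) ∂P
      = (∫ p : ℝ × ℕ, ((1 + rexp p.1 ^ 2) * (fun _ : ℕ => (1:ℝ)) p.2) ∂P)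
        + ∫ p : ℝ × ℕ, ((2 * rexp p.1) * (η * (p.2 : ℝ) + κ * lam)) ∂P :=
    integral_add hF1 hF2
  have hsplit : ∫ p : ℝ × ℕ, (1 + (Real.exp p.1 + η * (p.2 : ℝ) + κ * lam) ^ 2) ∂P
      = (∫ p : ℝ × ℕ, ((1 + rexp p.1 ^ 2) * (fun _ : ℕ => (1:ℝ)) p.2) ∂P)
        + (∫ p : ℝ × ℕ, ((2 * rexp p.1) * (η * (p.2 : ℝ) + κ * lam)) ∂P)
        + (∫ p : ℝ × ℕ, ((fun _ : ℝ => (1:ℝ)) p.1 *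
            (η ^ 2 * ((p.2 : ℝ))^2 + (2 * η * (κ * lam) * (p.2 : ℝ) + (κ * lam) ^ 2))) ∂P) := by
    rw [← e2, ← e1]
    refine integral_congr_ae (ae_of_all _ fun p => ?_)
    dsimp only
    ring
  -- compute each product integral
  have hγprob : IsProbabilityMeasure γ := by
    rw [hγ_def]; infer_instance
  have hpprob : IsProbabilityMeasure (poissonMeasure r) := by infer_instance
  have hI1 : (∫ p : ℝ × ℕ, ((1 + rexp p.1 ^ 2) * (fun _ : ℕ => (1:ℝ)) p.2) ∂P)
      = 1 + m2 := by
    have p1 : (∫ p : ℝ × ℕ, ((1 + rexp p.1 ^ 2) * (fun _ : ℕ => (1:ℝ)) p.2) ∂P)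
        = (∫ y, (1 + rexp y ^ 2) ∂γ) * ∫ _n : ℕ, (1:ℝ) ∂(poissonMeasure r) :=
      integral_prod_mul (μ := γ) (ν := poissonMeasure r)
        (f := fun y : ℝ => 1 + rexp y ^ 2) (g := fun _ : ℕ => (1:ℝ))
    have p2 : (∫ y, (1 + rexp y ^ 2) ∂γ)
        = (∫ _y : ℝ, (1:ℝ) ∂γ) + ∫ y, rexp y ^ 2 ∂γ :=
      integral_add (integrable_const 1) (integrable_expsq_gaussian' α v hv)
    rw [p1, p2]
    simp [hm2_def]
  have hI2 : (∫ p : ℝ × ℕ, ((2 * rexp p.1) * (η * (p.2 : ℝ) + κ * lam)) ∂P)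
      = (2 * m1) * (η * lam + κ * lam) := by
    have p1 : (∫ p : ℝ × ℕ, ((2 * rexp p.1) * (η * (p.2 : ℝ) + κ * lam)) ∂P)
        = (∫ y, 2 * rexp y ∂γ) * ∫ n : ℕ, (η * (n : ℝ) + κ * lam) ∂(poissonMeasure r) :=
      integral_prod_mul (μ := γ) (ν := poissonMeasure r)
        (f := fun y : ℝ => 2 * rexp y) (g := fun n : ℕ => η * (n : ℝ) + κ * lam)
    have p2 : (∫ n : ℕ, (η * (n : ℝ) + κ * lam) ∂(poissonMeasure r))
        = (∫ n : ℕ, η * (n : ℝ) ∂(poissonMeasure r))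
          + ∫ _n : ℕ, κ * lam ∂(poissonMeasure r) :=
      integral_add ((integrable_poisson_id' r).const_mul η) (integrable_const (κ * lam))
    have p3 : (∫ n : ℕ, η * (n : ℝ) ∂(poissonMeasure r))
        = η * ∫ n : ℕ, (n : ℝ) ∂(poissonMeasure r) := integral_const_mul _ _
    have p4 : (∫ y, 2 * rexp y ∂γ) = 2 * ∫ y, rexp y ∂γ := integral_const_mul _ _
    rw [p1, p2, p3, p4, integral_poisson_id', hr]
    simp [hm1_def]
  have hI3 : (∫ p : ℝ × ℕ, ((fun _ : ℝ => (1:ℝ)) p.1 *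
        (η ^ 2 * ((p.2 : ℝ))^2 + (2 * η * (κ * lam) * (p.2 : ℝ) + (κ * lam) ^ 2))) ∂P)
      = η ^ 2 * (lam ^ 2 + lam) + (2 * η * (κ * lam) * lam + (κ * lam) ^ 2) := by
    have p1 : (∫ p : ℝ × ℕ, ((fun _ : ℝ => (1:ℝ)) p.1 *
          (η ^ 2 * ((p.2 : ℝ))^2 + (2 * η * (κ * lam) * (p.2 : ℝ) + (κ * lam) ^ 2))) ∂P)
        = (∫ _y : ℝ, (1:ℝ) ∂γ) * ∫ n : ℕ,
            (η ^ 2 * ((n : ℝ))^2 + (2 * η * (κ * lam) * (n : ℝ) + (κ * lam) ^ 2))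
            ∂(poissonMeasure r) :=
      integral_prod_mul (μ := γ) (ν := poissonMeasure r)
        (f := fun _ : ℝ => (1:ℝ))
        (g := fun n : ℕ => η ^ 2 * ((n : ℝ))^2 + (2 * η * (κ * lam) * (n : ℝ) + (κ * lam) ^ 2))
    have p2 : (∫ n : ℕ, (η ^ 2 * ((n : ℝ))^2 + (2 * η * (κ * lam) * (n : ℝ) + (κ * lam) ^ 2))
          ∂(poissonMeasure r))
        = (∫ n : ℕ, η ^ 2 * ((n : ℝ))^2 ∂(poissonMeasure r))
          + ∫ n : ℕ, (2 * η * (κ * lam) * (n : ℝ) + (κ * lam) ^ 2) ∂(poissonMeasure r) :=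
      integral_add ((integrable_poisson_sq' r).const_mul (η ^ 2))
        (((integrable_poisson_id' r).const_mul (2 * η * (κ * lam))).add
          (integrable_const ((κ * lam) ^ 2)))
    have p3 : (∫ n : ℕ, (2 * η * (κ * lam) * (n : ℝ) + (κ * lam) ^ 2) ∂(poissonMeasure r))
        = (∫ n : ℕ, 2 * η * (κ * lam) * (n : ℝ) ∂(poissonMeasure r))
          + ∫ _n : ℕ, (κ * lam) ^ 2 ∂(poissonMeasure r) :=
      integral_add ((integrable_poisson_id' r).const_mul (2 * η * (κ * lam)))
        (integrable_const ((κ * lam) ^ 2))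
    have p4 : (∫ n : ℕ, η ^ 2 * ((n : ℝ))^2 ∂(poissonMeasure r))
        = η ^ 2 * ∫ n : ℕ, ((n : ℝ))^2 ∂(poissonMeasure r) := integral_const_mul _ _
    have p5 : (∫ n : ℕ, 2 * η * (κ * lam) * (n : ℝ) ∂(poissonMeasure r))
        = 2 * η * (κ * lam) * ∫ n : ℕ, (n : ℝ) ∂(poissonMeasure r) := integral_const_mul _ _
    rw [p1, p2, p3, p4, p5, integral_poisson_id', integral_poisson_sq', hr]
    simp
  have hval : ∫ p : ℝ × ℕ, (1 + (Real.exp p.1 + η * (p.2 : ℝ) + κ * lam) ^ 2) ∂P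
      = (1 + m2) + a * lam ^ 2 + b * lam := by
    rw [hsplit, hI1, hI2, hI3, ha_def, hb_def]
    ring
  rw [hval]
  by_cases hcase : lam ≤ G
  · rw [if_pos hcase]
    have hsq : lam ^ 2 ≤ G ^ 2 := pow_le_pow_left₀ hlam hcase 2
    have h1 : a * lam ^ 2 ≤ a * G ^ 2 := mul_le_mul_of_nonneg_left hsq ha0
    have h2 : b * lam ≤ b * G := mul_le_mul_of_nonneg_left hcase hb0
    have hψpos : 0 < ψ := by simp only [hψ_def]; linarith
    have h3 : 0 ≤ ψ * (1 + lam ^ 2) :=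
      mul_nonneg hψpos.le (by positivity)
    linarith [hL_def, h1, h2, h3]
  · rw [if_neg hcase, add_zero]
    push_neg at hcase
    have hlam1 : 1 ≤ lam := le_trans hG1 hcase.le
    have h1 : (b + 1 + m2) * lam ≤ (δ * G) * lam :=
      mul_le_mul_of_nonneg_right hGδ hlam
    have h2 : (δ * G) * lam ≤ δ * lam * lam :=
      mul_le_mul_of_nonneg_right (mul_le_mul_of_nonneg_left hcase.le hδ.le) hlam
    have h3 : 1 + m2 ≤ (1 + m2) * lam := le_mul_of_one_le_right (by linarith) hlam1
    have hring : δ * lam * lam = δ * lam ^ 2 := by ring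
    have hψpos : 0 < ψ := by simp only [hψ_def]; linarith
    have hexp : ψ * (1 + lam ^ 2) = ψ + a * lam ^ 2 + δ * lam ^ 2 := by
      simp only [hψ_def, hδ_def]; ring
    have hdist : (b + 1 + m2) * lam = b * lam + (1 + m2) * lam := by ring
    linarith [h1, h2, h3, hring, hψpos, hexp, hdist]
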